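/- For every integer n ≥ 2, Cov(n, 1) = 2^{−n}·binom(n−2, ⌊(n−1)/2⌋). Moreover, there exists a constant C > 0 such that for all integers n ≥ 3, | Cov(n, 1) − √(1/(8π(n−2))) | ≤ C·n^{−3/2}. -/

import Mathlib

open Real Filter

/-- Binomial coefficient with an integer lower index, with the convention that it
vanishes for negative lower index (and, via `Nat.choose`, above the upper index). -/
def ibinom (a : ℕ) (b : ℤ) : ℕ := if 0 ≤ b then a.choose b.toNat else 0

/-- The fold covariance of k-fold cross-validation of the Majority algorithm on `n`
i.i.d. uniformly random binary labels with fold size `m = n/k`: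
`Cov(n, m) = 2^{-n} · Σ_{j=0}^{m-1} binom(m-1, j)² · binom(n-2m, ⌊(n-m)/2⌋ - j)`. -/
noncomputable def Cov (n m : ℕ) : ℝ :=
  (2 : ℝ)⁻¹ ^ n * ∑ j ∈ Finset.range m,
    ((m - 1).choose j : ℝ) ^ 2 * (ibinom (n - 2 * m) (((n : ℤ) - m) / 2 - j) : ℝ)

/-- normalized central binomial coefficient `C(2k,k)/4^k` -/
noncomputable def cb (k : ℕ) : ℝ := (Nat.centralBinom k : ℝ) / 4 ^ k

lemma cb_pos (k : ℕ) : 0 < cb k := by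
  have := Nat.centralBinom_pos k
  unfold cb
  positivity

lemma cb_succ (k : ℕ) : cb (k + 1) = cb k * (2 * k + 1) / (2 * k + 2) := by
  have h := Nat.succ_mul_centralBinom_succ k
  have h' : ((k : ℝ) + 1) * (Nat.centralBinom (k + 1) : ℝ)
      = 2 * (2 * k + 1) * (Nat.centralBinom k : ℝ) := by exact_mod_cast h
  have hk1 : ((k : ℝ) + 1) ≠ 0 := by positivity
  unfold cb
  rw [pow_succ]
  field_simp
  linear_combination 2 * h'

/-- the key Wallis-type quantity -/
noncomputable def vv (k : ℕ) : ℝ := ((k : ℝ) + 1 / 2) * cb k ^ 2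

lemma vv_antitone : Antitone vv := by
  apply antitone_nat_of_succ_le
  intro k
  have hc := cb_pos k
  have hs := cb_succ k
  unfold vv
  push_cast
  rw [hs]
  have h2 : (0:ℝ) < 2 * k + 2 := by positivity
  rw [div_pow, ← mul_div_assoc, div_le_iff₀ (by positivity)]
  nlinarith [sq_nonneg (cb k), hc.le, sq_nonneg ((k:ℝ))]

/-- Wallis partial product (matching mathlib's `Real.tendsto_prod_pi_div_two`). -/
noncomputable def W (k : ℕ) : ℝ :=
  ∏ i ∈ Finset.range k, ((2 : ℝ) * i + 2) / (2 * i + 1) * ((2 * i + 2) / (2 * i + 3))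

lemma wallis_id (k : ℕ) : (2 * W k) * vv k = 1 := by
  induction k with
  | zero => simp [W, vv, cb, Nat.centralBinom]
  | succ k ih =>
    have hc := cb_pos k
    have hs := cb_succ k
    unfold W vv at *
    rw [Finset.prod_range_succ, hs]
    push_cast
    have h1 : (0:ℝ) < 2 * k + 1 := by positivity
    have h2 : (0:ℝ) < 2 * k + 2 := by positivity
    have h3 : (0:ℝ) < 2 * k + 3 := by positivity
    field_simp at ih ⊢
    linear_combination (2*(k:ℝ)+3) * ih

lemma vv_tendsto : Tendsto vv atTop (nhds (1 / π)) := by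
  have hW : Tendsto W atTop (nhds (π / 2)) := Real.tendsto_prod_pi_div_two
  have h2W : Tendsto (fun k => 2 * W k) atTop (nhds (2 * (π / 2))) := hW.const_mul 2
  have hne : 2 * (π / 2) ≠ 0 := by
    have := Real.pi_pos; intro h; nlinarith
  have hinv : Tendsto (fun k => (2 * W k)⁻¹) atTop (nhds ((2 * (π / 2))⁻¹)) :=
    h2W.inv₀ hne
  have heq : (fun k => (2 * W k)⁻¹) = vv := by
    funext k
    exact inv_eq_of_mul_eq_one_right (wallis_id k)
  rw [heq] at hinv
  convert hinv using 2
  field_simp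

lemma vv_ge (k : ℕ) : 1 / π ≤ vv k :=
  vv_antitone.le_of_tendsto vv_tendsto k

lemma uu_mono : Monotone (fun k : ℕ => (k : ℝ) * cb k ^ 2) := by
  apply monotone_nat_of_le_succ
  intro k
  have hc := cb_pos k
  have hs := cb_succ k
  push_cast
  rw [hs]
  have h2 : (0:ℝ) < 2 * k + 2 := by positivity
  rw [div_pow, ← mul_div_assoc, le_div_iff₀ (by positivity)]
  nlinarith [sq_nonneg (cb k), hc.le, sq_nonneg ((k:ℝ))]

lemma uu_le (k : ℕ) : (k : ℝ) * cb k ^ 2 ≤ 1 / π := by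
  refine ge_of_tendsto vv_tendsto (eventually_atTop.2 ⟨k, fun m hm => ?_⟩)
  calc (k : ℝ) * cb k ^ 2 ≤ (m : ℝ) * cb m ^ 2 := uu_mono hm
    _ ≤ vv m := by
        unfold vv
        nlinarith [sq_nonneg (cb m)]

lemma cb_sq_upper (k : ℕ) (hk : 1 ≤ k) : cb k ^ 2 ≤ 1 / (π * k) := by
  have hπ := Real.pi_pos
  have hk' : (1:ℝ) ≤ (k:ℝ) := by exact_mod_cast hk
  have h := uu_le k
  rw [le_div_iff₀ (by positivity)]
  nlinarith [mul_le_mul_of_nonneg_left h hπ.le, mul_pos hπ hπ,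
    mul_div_cancel₀ (1:ℝ) (ne_of_gt hπ)]

lemma cb_sq_lower (k : ℕ) : 1 / (π * ((k:ℝ) + 1/2)) ≤ cb k ^ 2 := by
  have hπ := Real.pi_pos
  have h := vv_ge k
  rw [div_le_iff₀ (by positivity)]
  unfold vv at h
  nlinarith [mul_le_mul_of_nonneg_left h hπ.le, mul_div_cancel₀ (1:ℝ) (ne_of_gt hπ)]

lemma diff_sqrt_bound (t : ℝ) (ht : 1/2 ≤ t) :
    Real.sqrt (1 / (π * t)) - Real.sqrt (1 / (π * (t + 1))) ≤ t⁻¹ / Real.sqrt t := by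
  have hπ := Real.pi_pos
  have ht0 : (0:ℝ) < t := by linarith
  have ht1 : (0:ℝ) < t + 1 := by linarith
  set s := Real.sqrt t with hs
  set s' := Real.sqrt (t + 1) with hs'
  have hspos : 0 < s := Real.sqrt_pos.2 ht0
  have hs'pos : 0 < s' := Real.sqrt_pos.2 ht1
  have hsq : s ^ 2 = t := Real.sq_sqrt ht0.le
  have hs'q : s' ^ 2 = t + 1 := Real.sq_sqrt ht1.le
  have hss' : s ≤ s' := Real.sqrt_le_sqrt (by linarith)
  have hπs : Real.sqrt π ≥ 1 := by
    rw [show (1:ℝ) = Real.sqrt 1 by simp]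
    exact Real.sqrt_le_sqrt (by linarith [Real.pi_gt_three])
  have hπspos : 0 < Real.sqrt π := by linarith
  have e1 : Real.sqrt (1 / (π * t)) = 1 / (Real.sqrt π * s) := by
    rw [hs, ← Real.sqrt_mul hπ.le, Real.sqrt_div' 1 (by positivity), Real.sqrt_one]
  have e2 : Real.sqrt (1 / (π * (t + 1))) = 1 / (Real.sqrt π * s') := by
    rw [hs', ← Real.sqrt_mul hπ.le, Real.sqrt_div' 1 (by positivity), Real.sqrt_one]
  rw [e1, e2]
  -- 1/(√π s) - 1/(√π s') ≤ 1/s - 1/s' ≤ 1/(t s)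
  have step1 : 1 / (Real.sqrt π * s) - 1 / (Real.sqrt π * s') ≤ 1/s - 1/s' := by
    have h1 : 1 / (Real.sqrt π * s) - 1 / (Real.sqrt π * s')
        = (1/Real.sqrt π) * (1/s - 1/s') := by field_simp
    have h2 : 0 ≤ 1/s - 1/s' := by
      rw [sub_nonneg]
      exact one_div_le_one_div_of_le hspos hss'
    rw [h1]
    have : 1/Real.sqrt π ≤ 1 := by
      rw [div_le_one hπspos]; exact hπs
    nlinarith
  have hsum : (0:ℝ) < s' + s := by linarith
  have key : (s' - s) * (s' + s) = 1 := by nlinarith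
  have step2 : 1/s - 1/s' ≤ t⁻¹ / s := by
    have e4 : t⁻¹ / s = 1 / (t * s) := by
      rw [inv_eq_one_div, div_div]
    rw [div_sub_div _ _ (ne_of_gt hspos) (ne_of_gt hs'pos), e4,
      div_le_div_iff₀ (by positivity) (by positivity)]
    refine le_of_mul_le_mul_right ?_ hsum
    have hA : (1 * s' - s * 1) * (t * s) * (s' + s) = t * s := by
      linear_combination (t * s) * key
    have hss2 : s * s ≤ s' * s' := mul_le_mul hss' hss' hspos.le hs'pos.le
    rw [hA]
    nlinarith [hss2, hspos, hs'pos, mul_pos hspos hs'pos, hsq]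
  calc 1 / (Real.sqrt π * s) - 1 / (Real.sqrt π * s') ≤ 1/s - 1/s' := step1
    _ ≤ t⁻¹ / s := step2
  
lemma key_lemma (K : ℕ) (hK : 1 ≤ K) (t : ℝ) (ht : 1/2 ≤ t) (h1 : t ≤ (K:ℝ))
    (h2 : (K:ℝ) ≤ t + 1/2) :
    |cb K - Real.sqrt (1 / (π * t))| ≤ t⁻¹ / Real.sqrt t := by
  have hπ := Real.pi_pos
  have ht0 : (0:ℝ) < t := by linarith
  have hK0 : (0:ℝ) < (K:ℝ) := by linarith
  have hub : cb K ≤ Real.sqrt (1 / (π * t)) := by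
    have hc := cb_pos K
    calc cb K = Real.sqrt (cb K ^ 2) := (Real.sqrt_sq hc.le).symm
      _ ≤ Real.sqrt (1 / (π * K)) := Real.sqrt_le_sqrt (cb_sq_upper K hK)
      _ ≤ Real.sqrt (1 / (π * t)) := by
          apply Real.sqrt_le_sqrt
          apply div_le_div_of_nonneg_left (by norm_num) (by positivity)
          exact mul_le_mul_of_nonneg_left h1 hπ.le
  have hlb : Real.sqrt (1 / (π * (t + 1))) ≤ cb K := by
    have hc := cb_pos K
    calc Real.sqrt (1 / (π * (t + 1)))
        ≤ Real.sqrt (1 / (π * ((K:ℝ) + 1/2))) := by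
          apply Real.sqrt_le_sqrt
          apply div_le_div_of_nonneg_left (by norm_num) (by positivity)
          apply mul_le_mul_of_nonneg_left (by linarith) hπ.le
      _ ≤ Real.sqrt (cb K ^ 2) := Real.sqrt_le_sqrt (cb_sq_lower K)
      _ = cb K := Real.sqrt_sq hc.le
  rw [abs_sub_le_iff]
  constructor
  · have hb : 0 ≤ t⁻¹ / Real.sqrt t := by positivity
    linarith
  · have := diff_sqrt_bound t ht
    linarith

lemma cov_one (n : ℕ) (hn : 2 ≤ n) :
    Cov n 1 = (2 : ℝ)⁻¹ ^ n * ((n - 2).choose ((n - 1) / 2) : ℝ) := by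
  have key : ibinom (n - 2) (((n:ℤ) - 1) / 2)
      = (n - 2).choose ((n - 1) / 2) := by
    unfold ibinom
    rw [if_pos (by omega)]
    congr 1
    omega
  simp [Cov, key]

lemma cov_cb (n : ℕ) (hn : 3 ≤ n) : Cov n 1 = (1/4) * cb ((n - 1) / 2) := by
  rw [cov_one n (by omega)]
  obtain ⟨k, hk⟩ : ∃ k, n = 2*k+2 ∨ n = 2*k+3 := ⟨(n-2)/2, by omega⟩
  rcases hk with h | h
  · subst h
    have e1 : 2*k+2-2 = 2*k := by omega
    have e2 : (2*k+2-1)/2 = k := by omega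
    rw [e1, e2]
    unfold cb
    rw [Nat.centralBinom]
    have h4 : ((2:ℝ)⁻¹) ^ 2 = (4:ℝ)⁻¹ := by norm_num
    have hp : ((2:ℝ)⁻¹) ^ (2*k+2) = (1/4) * ((4:ℝ) ^ k)⁻¹ := by
      rw [pow_add, pow_mul, h4, inv_pow]
      ring
    rw [hp]
    ring
  · subst h
    have e1 : 2*k+3-2 = 2*k+1 := by omega
    have e2 : (2*k+3-1)/2 = k+1 := by omega
    rw [e1, e2]
    have hch : 2 * ((2*k+1).choose (k+1)) = Nat.centralBinom (k+1) := by
      have hcb : Nat.centralBinom (k+1) = (2*k+1).choose k + (2*k+1).choose (k+1) := by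
        rw [Nat.centralBinom, show 2*(k+1) = (2*k+1) + 1 by ring]
        exact Nat.choose_succ_succ _ _
      have hsymm : (2*k+1).choose k = (2*k+1).choose (k+1) := by
        have h := Nat.choose_symm (show k ≤ 2*k+1 by omega)
        have he : 2*k+1-k = k+1 := by omega
        rw [he] at h
        exact h.symm
      omega
    have hch' : ((2*k+1).choose (k+1) : ℝ) = (Nat.centralBinom (k+1) : ℝ) / 2 := by
      have : (2 * ((2*k+1).choose (k+1)) : ℝ) = (Nat.centralBinom (k+1) : ℝ) := by
        exact_mod_cast congrArg (Nat.cast : ℕ → ℝ) hch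
      linarith
    rw [hch']
    unfold cb
    have h4 : ((2:ℝ)⁻¹) ^ 2 = (4:ℝ)⁻¹ := by norm_num
    have hp : ((2:ℝ)⁻¹) ^ (2*k+3) = (1/2) * ((4:ℝ) ^ (k+1))⁻¹ := by
      rw [show 2*k+3 = 2*(k+1)+1 by ring, pow_add, pow_mul, h4, inv_pow, pow_one]
      ring
    rw [hp]
    ring

lemma rpow_neg_three_half (x : ℝ) (hx : 0 < x) :
    x ^ (-(3:ℝ)/2) = x⁻¹ / Real.sqrt x := by
  rw [show (-(3:ℝ)/2) = -(3/2) by norm_num, Real.rpow_neg hx.le]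
  rw [show (3/2:ℝ) = 1 + 1/2 by norm_num, Real.rpow_add hx, Real.rpow_one,
    ← Real.sqrt_eq_rpow]
  rw [mul_inv, div_eq_mul_inv]

/-- **Leave-one-out endpoint (`m = 1`).**
`Cov(n, 1) = 2^{-n}·binom(n-2, ⌊(n-1)/2⌋)`, and
`Cov(n, 1) = √(1/(8π(n-2))) + O(n^{-3/2})`. -/
theorem cov_loo_endpoint :
    (∀ n : ℕ, 2 ≤ n → Cov n 1 = (2 : ℝ)⁻¹ ^ n * ((n - 2).choose ((n - 1) / 2) : ℝ)) ∧
    ∃ C : ℝ, 0 < C ∧ ∀ n : ℕ, 3 ≤ n →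
      |Cov n 1 - Real.sqrt (1 / (8 * π * ((n : ℝ) - 2)))| ≤ C * (n : ℝ) ^ (-(3 : ℝ) / 2) := by
  constructor
  · exact fun n hn => cov_one n hn
  · refine ⟨100, by norm_num, fun n hn => ?_⟩
    have hπ := Real.pi_pos
    have hn3 : (3:ℝ) ≤ (n:ℝ) := by exact_mod_cast hn
    set K : ℕ := (n - 1) / 2 with hKdef
    set t : ℝ := ((n:ℝ) - 2) / 2 with htdef
    have hK1 : 1 ≤ K := by omega
    have ht : 1/2 ≤ t := by rw [htdef]; linarith
    have ht0 : 0 < t := by linarith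
    have hc1 : n ≤ 2 * K + 2 := by omega
    have hc2 : 2 * K + 1 ≤ n := by omega
    have h1 : t ≤ (K:ℝ) := by
      have : (n:ℝ) ≤ 2 * K + 2 := by exact_mod_cast hc1
      rw [htdef]; linarith
    have h2 : (K:ℝ) ≤ t + 1/2 := by
      have : 2 * (K:ℝ) + 1 ≤ (n:ℝ) := by exact_mod_cast hc2
      rw [htdef]; linarith
    -- rewrite the target sqrt
    have hsq : Real.sqrt (1 / (8 * π * ((n:ℝ) - 2))) = (1/4) * Real.sqrt (1 / (π * t)) := by
      have harg : 1 / (8 * π * ((n:ℝ) - 2)) = (1/16) * (1 / (π * t)) := by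
        rw [htdef]
        have hne : (n:ℝ) - 2 ≠ 0 := by intro h; nlinarith
        field_simp
        ring
      rw [harg, Real.sqrt_mul (by norm_num : (0:ℝ) ≤ 1/16),
        show (1/16:ℝ) = (1/4)^2 by norm_num, Real.sqrt_sq (by norm_num : (0:ℝ) ≤ 1/4)]
    rw [hsq, cov_cb n hn, ← mul_sub, abs_mul,
      show |(1/4 : ℝ)| = 1/4 by norm_num]
    have hkey := key_lemma K hK1 t ht h1 h2
    have hbound : (1/4 : ℝ) * |cb K - Real.sqrt (1 / (π * t))| ≤ (1/4) * (t⁻¹ / Real.sqrt t) := by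
      linarith
    refine hbound.trans ?_
    -- final comparison: (1/4) t^{-3/2} ≤ 100 n^{-3/2}
    have hn0 : (0:ℝ) < (n:ℝ) := by linarith
    rw [rpow_neg_three_half (n:ℝ) hn0]
    set s := Real.sqrt t with hsdef
    set sn := Real.sqrt (n:ℝ) with hsndef
    have hspos : 0 < s := Real.sqrt_pos.2 ht0
    have hsnpos : 0 < sn := Real.sqrt_pos.2 hn0
    have hsq' : s ^ 2 = t := Real.sq_sqrt ht0.le
    have hsnq : sn ^ 2 = (n:ℝ) := Real.sq_sqrt hn0.le
    have htn : (n:ℝ) / 6 ≤ t := by rw [htdef]; linarith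
    have hssn : sn / 3 ≤ s := by
      have h9 : (n:ℝ) / 9 ≤ t := by linarith
      nlinarith [sq_nonneg (s - sn/3), sq_nonneg (s + sn/3)]
    have lhs_eq : (1/4 : ℝ) * (t⁻¹ / s) = 1 / (4 * (t * s)) := by
      field_simp
    have rhs_eq : (100 : ℝ) * ((n:ℝ)⁻¹ / sn) = 100 / ((n:ℝ) * sn) := by
      field_simp
    rw [lhs_eq, rhs_eq]
    rw [div_le_div_iff₀ (by positivity) (by positivity)]
    have hprod : (n:ℝ) / 6 * (sn / 3) ≤ t * s :=
      mul_le_mul htn hssn (by positivity) ht0.le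
    nlinarith [mul_pos ht0 hspos, mul_pos hn0 hsnpos]
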